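/- Fix n ≥ 2, A ∈ ℂ^{n×n}, ε > 0, λ ∈ ℂ, and E ∈ ℂ^{n×n} with ‖E‖_F < 1. Let x, y ∈ ℂ^n be unit vectors with (A+εE)x = λx, y^H(A+εE) = λ y^H, and y^H x ≠ 0. Then there exists α ∈ ℝ such that the matrix E_α := E + α(I − x y^H/(y^H x)) satisfies ‖E_α‖_F = 1, and moreover x and y remain right and left eigenvectors of A+εE_α with the same eigenvalue λ, i.e. (A+εE_α)x = λx and y^H(A+εE_α) = λ y^H. -/

import Mathlib

open Matrix

/-- Frobenius inner product `⟨A,B⟩ = trace(Aᴴ B)`. -/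
noncomputable def frobInner {n : ℕ} (A B : Matrix (Fin n) (Fin n) ℂ) : ℂ :=
  (Aᴴ * B).trace

/-- Frobenius norm `‖A‖_F = √⟨A,A⟩`. -/
noncomputable def frobNorm {n : ℕ} (A : Matrix (Fin n) (Fin n) ℂ) : ℝ :=
  Real.sqrt (frobInner A A).re

lemma aux_vecMulVec_mulVec {n : ℕ} (x y z : Fin n → ℂ) :
    vecMulVec x y *ᵥ z = (y ⬝ᵥ z) • x := by
  ext i
  simp only [mulVec, vecMulVec_apply, dotProduct, Pi.smul_apply, smul_eq_mul, Finset.sum_mul]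
  exact Finset.sum_congr rfl fun j _ => by ring

lemma aux_vecMul_vecMulVec {n : ℕ} (x y z : Fin n → ℂ) :
    z ᵥ* vecMulVec x y = (z ⬝ᵥ x) • y := by
  ext j
  simp only [vecMul, vecMulVec_apply, dotProduct, Pi.smul_apply, smul_eq_mul, Finset.sum_mul]
  exact Finset.sum_congr rfl fun i _ => by ring

lemma aux_frobInner_self_re {n : ℕ} (M : Matrix (Fin n) (Fin n) ℂ) :
    (frobInner M M).re = ∑ j, ∑ i, Complex.normSq (M i j) := by
  unfold frobInner
  simp [trace, Matrix.mul_apply, diag, Complex.re_sum, Complex.mul_re, Complex.normSq_apply]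

lemma aux_frobInner_quad {n : ℕ} (E P : Matrix (Fin n) (Fin n) ℂ) (r : ℝ) :
    (frobInner (E + (r:ℂ) • P) (E + (r:ℂ) • P)).re
      = (frobInner E E).re + 2*r*(frobInner E P).re + r^2*(frobInner P P).re := by
  have hPE : frobInner P E = star (frobInner E P) := by
    unfold frobInner
    rw [← trace_conjTranspose, conjTranspose_mul, conjTranspose_conjTranspose]
  unfold frobInner at *
  simp [conjTranspose_add, conjTranspose_smul, add_mul, mul_add, trace_add, trace_smul,
    Matrix.smul_mul, Matrix.mul_smul, smul_smul]
  rw [show (Pᴴ*E).trace = star (Eᴴ*P).trace from hPE]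
  simp [Complex.add_re, Complex.mul_re, Complex.re_ofReal_mul]
  ring

lemma aux_vecMul_msmul {n : ℕ} (v : Fin n → ℂ) (a : ℂ) (A : Matrix (Fin n) (Fin n) ℂ) :
    v ᵥ* (a • A) = a • (v ᵥ* A) := by
  ext j
  simp only [vecMul, dotProduct, Matrix.smul_apply, Pi.smul_apply, smul_eq_mul, Finset.mul_sum]
  exact Finset.sum_congr rfl fun i _ => by ring

theorem stmt15 {n : ℕ} (hn : 2 ≤ n) (A : Matrix (Fin n) (Fin n) ℂ) (ε : ℝ) (hε : 0 < ε)
    (lam : ℂ) (E : Matrix (Fin n) (Fin n) ℂ) (hEnorm : frobNorm E < 1)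
    (x y : Fin n → ℂ)
    (hxnorm : star x ⬝ᵥ x = 1) (hynorm : star y ⬝ᵥ y = 1)
    (heig : (A + (ε : ℂ) • E) *ᵥ x = lam • x)
    (hleig : star y ᵥ* (A + (ε : ℂ) • E) = lam • star y)
    (hyx : star y ⬝ᵥ x ≠ 0) :
    ∃ α : ℝ,
      frobNorm (E + (α : ℂ) • (1 - (star y ⬝ᵥ x)⁻¹ • vecMulVec x (star y))) = 1 ∧
      (A + (ε : ℂ) • (E + (α : ℂ) • (1 - (star y ⬝ᵥ x)⁻¹ • vecMulVec x (star y)))) *ᵥ x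
        = lam • x ∧
      star y ᵥ* (A + (ε : ℂ) • (E + (α : ℂ) • (1 - (star y ⬝ᵥ x)⁻¹ • vecMulVec x (star y))))
        = lam • star y := by
  set c : ℂ := star y ⬝ᵥ x with hc
  set P : Matrix (Fin n) (Fin n) ℂ := 1 - c⁻¹ • vecMulVec x (star y) with hP
  -- P kills x on the right and y on the left
  have hPx : P *ᵥ x = 0 := by
    rw [hP, sub_mulVec, one_mulVec, smul_mulVec, aux_vecMulVec_mulVec, ← hc,
      smul_smul, inv_mul_cancel₀ hyx, one_smul, sub_self]
  have hyP : star y ᵥ* P = 0 := by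
    rw [hP, vecMul_sub, vecMul_one, aux_vecMul_msmul, aux_vecMul_vecMulVec, ← hc,
      smul_smul, inv_mul_cancel₀ hyx, one_smul, sub_self]
  -- eigen equations hold for every α
  have hsplit : ∀ α : ℝ, A + (ε : ℂ) • (E + (α:ℂ) • P) = (A + (ε:ℂ) • E) + ((ε:ℂ)*(α:ℂ)) • P := by
    intro α
    rw [smul_add, smul_smul, add_assoc]
  have heig' : ∀ α : ℝ, (A + (ε : ℂ) • (E + (α:ℂ) • P)) *ᵥ x = lam • x := by
    intro α
    rw [hsplit, add_mulVec, heig, smul_mulVec, hPx, smul_zero, add_zero]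
  have hleig' : ∀ α : ℝ, star y ᵥ* (A + (ε : ℂ) • (E + (α:ℂ) • P)) = lam • star y := by
    intro α
    rw [hsplit, vecMul_add, hleig, aux_vecMul_msmul, hyP, smul_zero, add_zero]
  -- nonzero entry of P
  have i0 : Fin n := ⟨0, by omega⟩
  have i1 : Fin n := ⟨1, by omega⟩
  have hne : (⟨0, by omega⟩ : Fin n) ≠ ⟨1, by omega⟩ := by
    simp [Fin.ext_iff]
  have hPentry : ∃ i j, P i j ≠ 0 := by
    by_contra h
    push_neg at h
    have h00 := h ⟨0, by omega⟩ ⟨0, by omega⟩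
    have h01 := h ⟨0, by omega⟩ ⟨1, by omega⟩
    have h11 := h ⟨1, by omega⟩ ⟨1, by omega⟩
    rw [hP] at h00 h01 h11
    simp only [Matrix.sub_apply, Matrix.smul_apply, one_apply, vecMulVec_apply, Pi.star_apply,
      smul_eq_mul, if_pos rfl, if_neg hne] at h00 h01 h11
    -- h00 : 1 - c⁻¹ * (x 0 * star (y 0)) = 0, etc.
    have hcinv : c⁻¹ ≠ 0 := inv_ne_zero hyx
    have hx0 : x ⟨0, by omega⟩ ≠ 0 := by
      intro hz
      rw [hz] at h00
      simp at h00
    have hy1 : star (y ⟨1, by omega⟩) ≠ 0 := by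
      intro hz
      rw [hz] at h11
      simp at h11
    have : c⁻¹ * (x ⟨0, by omega⟩ * star (y ⟨1, by omega⟩)) ≠ 0 := by
      exact mul_ne_zero hcinv (mul_ne_zero hx0 hy1)
    exact this (by linear_combination -h01)
  -- positivity of p
  set p : ℝ := (frobInner P P).re with hpdef
  have hp : 0 < p := by
    obtain ⟨i, j, hij⟩ := hPentry
    rw [hpdef, aux_frobInner_self_re]
    have h1 : Complex.normSq (P i j) ≤ ∑ i', Complex.normSq (P i' j) :=
      Finset.single_le_sum (f := fun i' => Complex.normSq (P i' j))
        (fun _ _ => Complex.normSq_nonneg _) (Finset.mem_univ i)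
    have h2 : (∑ i', Complex.normSq (P i' j)) ≤ ∑ j', ∑ i', Complex.normSq (P i' j') :=
      Finset.single_le_sum (f := fun j' => ∑ i', Complex.normSq (P i' j'))
        (fun _ _ => Finset.sum_nonneg fun _ _ => Complex.normSq_nonneg _) (Finset.mem_univ j)
    have h0 : 0 < Complex.normSq (P i j) := Complex.normSq_pos.mpr hij
    linarith
  set e : ℝ := (frobInner E E).re with hedef
  set b : ℝ := (frobInner E P).re with hbdef
  have he0 : 0 ≤ e := by
    rw [hedef, aux_frobInner_self_re]
    exact Finset.sum_nonneg fun _ _ => Finset.sum_nonneg fun _ _ => Complex.normSq_nonneg _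
  have he1 : e < 1 := by
    have : Real.sqrt e < 1 := hEnorm
    nlinarith [Real.sq_sqrt he0, Real.sqrt_nonneg e]
  -- choose α
  set s : ℝ := Real.sqrt (b^2 + p*(1-e)) with hsdef
  have hs2 : s^2 = b^2 + p*(1-e) := Real.sq_sqrt (by nlinarith)
  refine ⟨(-b + s)/p, ?_, heig' _, hleig' _⟩
  have hquad : e + 2*((-b+s)/p)*b + ((-b+s)/p)^2*p = 1 := by
    field_simp
    nlinarith [hs2]
  rw [frobNorm, aux_frobInner_quad, ← hedef, ← hbdef, ← hpdef, hquad, Real.sqrt_one]
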